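/- For any sequence (d_k) with d_{-k} = d_k, det(d_{j-k})_{j,k=1}^{2N} = det(d_{j-k} - d_{j+k-1})_{j,k=1}^{N} · det(d_{j-k} + d_{j+k-1})_{j,k=1}^{N}. -/

import Mathlib

open Matrix

noncomputable def JJ (N : ℕ) : Matrix (Fin N) (Fin N) ℂ :=
  of fun j k => if k = Fin.rev j then 1 else 0

lemma rev_iff {N : ℕ} (k l : Fin N) : k = Fin.rev l ↔ l = Fin.rev k :=
  ⟨fun e => by simp [e, Fin.rev_rev], fun e => by simp [e, Fin.rev_rev]⟩

lemma mulJ {N : ℕ} (B : Matrix (Fin N) (Fin N) ℂ) :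
    B * JJ N = of fun j k => B j (Fin.rev k) := by
  ext j k
  simp only [Matrix.mul_apply, JJ, of_apply, mul_ite, mul_one, mul_zero]
  simp_rw [rev_iff]
  simp

lemma Jmul {N : ℕ} (B : Matrix (Fin N) (Fin N) ℂ) :
    JJ N * B = of fun j k => B (Fin.rev j) k := by
  ext j k
  simp only [Matrix.mul_apply, JJ, of_apply, ite_mul, one_mul, zero_mul]
  simp

lemma JJ_sq (N : ℕ) : JJ N * JJ N = 1 := by
  rw [mulJ]
  ext j k
  simp [JJ, one_apply, rev_iff, eq_comm]

lemma detJJ_ne (N : ℕ) : det (JJ N) ≠ 0 := by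
  intro h
  have h1 : det (JJ N) * det (JJ N) = 1 := by
    rw [← det_mul, JJ_sq, det_one]
  rw [h, mul_zero] at h1
  exact zero_ne_one h1

lemma rev_coe {N : ℕ} (j : Fin N) : ((Fin.rev j : Fin N) : ℤ) = (N : ℤ) - 1 - (j : ℤ) := by
  have h := j.is_lt
  simp only [Fin.val_rev]
  omega

lemma key (N : ℕ) (A B : Matrix (Fin N) (Fin N) ℂ) (hAJ : A * JJ N = JJ N * A) :
    det (fromBlocks A B (JJ N * B * JJ N) A) = det (A + B * JJ N) * det (A - B * JJ N) := by
  set Jm := JJ N with hJm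
  set X := A + B * Jm with hX
  set Y := A - B * Jm with hY
  have h1 : fromBlocks A B (Jm * B * Jm) A * fromBlocks 1 1 Jm (-Jm)
      = fromBlocks 1 0 Jm 1 * fromBlocks X Y 0 ((-2 : ℂ) • (Jm * Y)) := by
    rw [fromBlocks_multiply, fromBlocks_multiply]
    refine Matrix.fromBlocks_inj.mpr ⟨?_, ?_, ?_, ?_⟩
    all_goals simp only [Matrix.mul_one, Matrix.one_mul, Matrix.zero_mul, Matrix.mul_zero,
        Matrix.mul_neg, add_zero, zero_add, hAJ, hX, hY, Matrix.mul_add, Matrix.mul_sub,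
        Matrix.mul_assoc]
    all_goals module
  have h2 : (fromBlocks 1 1 Jm (-Jm) : Matrix (Fin N ⊕ Fin N) (Fin N ⊕ Fin N) ℂ)
      = fromBlocks 1 0 Jm 1 * fromBlocks 1 1 0 ((-2 : ℂ) • Jm) := by
    rw [fromBlocks_multiply]
    refine Matrix.fromBlocks_inj.mpr ⟨?_, ?_, ?_, ?_⟩
    all_goals simp only [Matrix.mul_one, Matrix.one_mul, Matrix.zero_mul, Matrix.mul_zero,
        add_zero, zero_add]
    all_goals module
  have hd1 := congrArg det h1
  rw [det_mul, h2, det_mul, det_mul, det_fromBlocks_zero₁₂, det_fromBlocks_zero₂₁,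
    det_fromBlocks_zero₂₁, det_one, one_mul, one_mul, det_smul, det_smul, det_mul] at hd1
  have hc : ((-2 : ℂ) ^ Fintype.card (Fin N) * det Jm) ≠ 0 :=
    mul_ne_zero (pow_ne_zero _ (by norm_num)) (detJJ_ne N)
  apply mul_left_cancel₀ hc
  linear_combination hd1

def revEquiv (N : ℕ) : Fin N ≃ Fin N := ⟨Fin.rev, Fin.rev, Fin.rev_rev, Fin.rev_rev⟩

theorem toeplitz_factorization_even (N : ℕ) (d : ℤ → ℂ) (hd : ∀ k : ℤ, d (-k) = d k) :
    det (of fun j k : Fin (2 * N) => d ((j : ℤ) - (k : ℤ))) =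
      det (of fun j k : Fin N =>
          d ((j : ℤ) - (k : ℤ)) - d ((j : ℤ) + (k : ℤ) + 1)) *
        det (of fun j k : Fin N =>
          d ((j : ℤ) - (k : ℤ)) + d ((j : ℤ) + (k : ℤ) + 1)) := by
  set A : Matrix (Fin N) (Fin N) ℂ := of fun j k => d ((j : ℤ) - (k : ℤ)) with hA
  set B : Matrix (Fin N) (Fin N) ℂ := of fun j k => d ((j : ℤ) - (k : ℤ) - N) with hB
  have hAJ : A * JJ N = JJ N * A := by
    rw [mulJ, Jmul]
    ext j k
    simp only [of_apply, hA]
    rw [rev_coe, rev_coe, ← hd ((j : ℤ) - ((N : ℤ) - 1 - k))]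
    congr 1
    ring
  set e : Fin N ⊕ Fin N ≃ Fin (2 * N) := finSumFinEquiv.trans (finCongr (two_mul N).symm)
    with he
  have hM : (of fun j k : Fin (2 * N) => d ((j : ℤ) - (k : ℤ))).submatrix e e
      = fromBlocks A B (JJ N * B * JJ N) A := by
    rw [mulJ, Jmul]
    ext jk kk
    cases jk with
    | inl j =>
      cases kk with
      | inl k => simp [he, hA]
      | inr k =>
        simp only [submatrix_apply, he, Equiv.trans_apply, finSumFinEquiv_apply_left,
          finSumFinEquiv_apply_right, finCongr_apply, Fin.coe_cast, Fin.coe_castAdd,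
          Fin.coe_natAdd, of_apply, fromBlocks_apply₁₂, hB]
        congr 1
        push_cast
        ring
    | inr j =>
      cases kk with
      | inl k =>
        simp only [submatrix_apply, he, Equiv.trans_apply, finSumFinEquiv_apply_left,
          finSumFinEquiv_apply_right, finCongr_apply, Fin.coe_cast, Fin.coe_castAdd,
          Fin.coe_natAdd, of_apply, fromBlocks_apply₂₁, hB]
        rw [rev_coe, rev_coe,
          show ((N : ℤ) - 1 - (j : ℤ)) - ((N : ℤ) - 1 - (k : ℤ)) - (N : ℤ)
              = -(((N + (j : ℕ) : ℕ) : ℤ) - (k : ℤ)) from by push_cast; ring, hd]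
      | inr k =>
        simp only [submatrix_apply, he, Equiv.trans_apply, finSumFinEquiv_apply_right,
          finCongr_apply, Fin.coe_cast, Fin.coe_natAdd, of_apply, fromBlocks_apply₂₂, hA]
        congr 1
        push_cast
        ring
  have hdet : det (of fun j k : Fin (2 * N) => d ((j : ℤ) - (k : ℤ)))
      = det (A + B * JJ N) * det (A - B * JJ N) := by
    rw [← det_submatrix_equiv_self e, hM, key N A B hAJ]
  rw [hdet, mul_comm]
  congr 1
  · rw [← det_submatrix_equiv_self (revEquiv N)
      (of fun j k : Fin N => d ((j : ℤ) - (k : ℤ)) - d ((j : ℤ) + (k : ℤ) + 1))]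
    congr 1
    rw [mulJ]
    ext j k
    simp only [Matrix.sub_apply, of_apply, submatrix_apply, hA, hB, revEquiv, Equiv.coe_fn_mk]
    rw [rev_coe, rev_coe,
      show ((N : ℤ) - 1 - (j : ℤ)) - ((N : ℤ) - 1 - (k : ℤ)) = -((j : ℤ) - (k : ℤ)) from by
        ring, hd,
      show ((N : ℤ) - 1 - (j : ℤ)) + ((N : ℤ) - 1 - (k : ℤ)) + 1
          = -((j : ℤ) - ((N : ℤ) - 1 - (k : ℤ)) - (N : ℤ)) from by ring, hd]
  · rw [← det_submatrix_equiv_self (revEquiv N)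
      (of fun j k : Fin N => d ((j : ℤ) - (k : ℤ)) + d ((j : ℤ) + (k : ℤ) + 1))]
    congr 1
    rw [mulJ]
    ext j k
    simp only [Matrix.add_apply, of_apply, submatrix_apply, hA, hB, revEquiv, Equiv.coe_fn_mk]
    rw [rev_coe, rev_coe,
      show ((N : ℤ) - 1 - (j : ℤ)) - ((N : ℤ) - 1 - (k : ℤ)) = -((j : ℤ) - (k : ℤ)) from by
        ring, hd,
      show ((N : ℤ) - 1 - (j : ℤ)) + ((N : ℤ) - 1 - (k : ℤ)) + 1
          = -((j : ℤ) - ((N : ℤ) - 1 - (k : ℤ)) - (N : ℤ)) from by ring, hd]
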